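/- Let p ≥ 5 be a prime and n a positive integer, and let X_1, …, X_p ⊆ 𝔽_p^n be such that every cycle (x_1, …, x_p) ∈ X_1 × ⋯ × X_p satisfies x_1 = x_2. Let ℳ be a collection of L pairwise disjoint cycles in X_1 × ⋯ × X_p. Then there exists a subcollection ℳ' ⊆ ℳ of size |ℳ'| ≥ L²/(2p^{n+1}) such that for any two distinct cycles (x_1, …, x_p), (x_1', …, x_p') ∈ ℳ' and any j ∈ {3, …, p}, the pair (x_1, x_j') is not j-extendable. -/
import Mathlib


open Finset

section indep

variable {α : Type*} [DecidableEq α]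

private def dR (R : α → α → Prop) [DecidableRel R] (V : Finset α) (v : α) : ℕ :=
  (V.filter fun u => v ≠ u ∧ R v u).card

private def BR (R : α → α → Prop) [DecidableRel R] (V : Finset α) : Finset (α × α) :=
  V.biUnion fun c => (V.filter fun u => c ≠ u ∧ R c u).image fun u => (c, u)

private lemma BR_card (R : α → α → Prop) [DecidableRel R] (V : Finset α) :
    (BR R V).card = ∑ v ∈ V, dR R V v := by
  rw [BR, card_biUnion]
  · exact sum_congr rfl fun v _ => card_image_of_injective _ (fun a b h => by simpa using h)
  · intro i _ j _ hij
    simp only [disjoint_left]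
    intro q hqi hqj
    simp only [mem_image] at hqi hqj
    obtain ⟨a, _, rfl⟩ := hqi
    obtain ⟨b, _, h⟩ := hqj
    exact hij (congrArg Prod.fst h).symm

private lemma mem_BR {R : α → α → Prop} [DecidableRel R] {V : Finset α} {q : α × α} :
    q ∈ BR R V ↔ q.1 ∈ V ∧ q.2 ∈ V ∧ q.1 ≠ q.2 ∧ R q.1 q.2 := by
  obtain ⟨a, b⟩ := q
  simp only [BR, mem_biUnion, mem_image, mem_filter, Prod.mk.injEq]
  constructor
  · rintro ⟨c, hc, u, ⟨hu, hcu, hR⟩, rfl, rfl⟩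
    exact ⟨hc, hu, hcu, hR⟩
  · rintro ⟨ha, hb, hab, hR⟩
    exact ⟨a, ha, b, ⟨hb, hab, hR⟩, rfl, rfl⟩

set_option maxHeartbeats 1000000 in
private lemma indep_bound (R : α → α → Prop) [DecidableRel R]
    (hsym : ∀ a b, R a b → R b a) :
    ∀ (N : ℕ) (V : Finset α), V.card ≤ N →
      ∃ S ⊆ V, (∀ x ∈ S, ∀ y ∈ S, x ≠ y → ¬ R x y) ∧
        (V.card : ℝ) ^ 2 ≤ S.card * (V.card + (BR R V).card) := by
  intro N
  induction N with
  | zero =>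
    intro V hV
    have hV0 : V = ∅ := card_eq_zero.mp (Nat.le_zero.mp hV)
    subst hV0
    exact ⟨∅, Finset.Subset.refl _, by simp, by norm_num⟩
  | succ N ih =>
    intro V hV
    rcases V.eq_empty_or_nonempty with rfl | hne
    · exact ⟨∅, Finset.Subset.refl _, by simp, by norm_num⟩
    obtain ⟨v, hv, hvmin⟩ := V.exists_min_image (dR R V) hne
    set d := dR R V v with hd
    set V' := V.filter (fun u => v ≠ u ∧ ¬ R v u) with hV'def
    have hV'sub : V' ⊆ V := filter_subset _ _
    have hvV' : v ∉ V' := fun h => (mem_filter.mp h).2.1 rfl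
    have hcompleq : (V.filter fun u => ¬ (v ≠ u ∧ ¬ R v u))
        = insert v (V.filter fun u => v ≠ u ∧ R v u) := by
      ext u
      simp only [mem_filter, mem_insert]
      by_cases huv : u = v
      · subst huv; simp [hv]
      · have h1 : v ≠ u := fun h => huv h.symm
        simp only [h1, not_false_iff, true_and, huv, false_or]
        tauto
    have hcompl : (V.filter fun u => ¬ (v ≠ u ∧ ¬ R v u)).card = d + 1 := by
      rw [hcompleq, card_insert_of_notMem (fun h => (mem_filter.mp h).2.1 rfl)]
      rfl
    have hcard : V'.card + (d + 1) = V.card := by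
      rw [← hcompl, hV'def]
      exact card_filter_add_card_filter_not _
    have hV'le : V'.card ≤ N := by
      have : V'.card < V.card := by omega
      omega
    obtain ⟨S', hS'sub, hS'ind, hS'bd⟩ := ih V' hV'le
    have hmono : ∀ u, dR R V' u ≤ dR R V u :=
      fun u => card_le_card (filter_subset_filter _ hV'sub)
    have hsplit : ∑ u ∈ V, dR R V u
        = ∑ u ∈ V', dR R V u + ∑ u ∈ V.filter (fun u => ¬ (v ≠ u ∧ ¬ R v u)), dR R V u := by
      rw [hV'def]
      exact (sum_filter_add_sum_filter_not V _ _).symm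
    have h2 : (d + 1) * d ≤ ∑ u ∈ V.filter (fun u => ¬ (v ≠ u ∧ ¬ R v u)), dR R V u := by
      have := Finset.card_nsmul_le_sum (V.filter (fun u => ¬ (v ≠ u ∧ ¬ R v u))) (dR R V) d
        (fun u hu => hvmin u (mem_of_mem_filter u hu))
      rw [hcompl] at this
      simpa [smul_eq_mul] using this
    have hbb' : (BR R V').card + (d + 1) * d ≤ (BR R V).card := by
      rw [BR_card, BR_card, hsplit]
      exact add_le_add (sum_le_sum fun u _ => hmono u) h2
    have hmd : V.card * d ≤ (BR R V).card := by
      rw [BR_card]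
      have := Finset.card_nsmul_le_sum V (dR R V) d (fun u hu => hvmin u hu)
      simpa [smul_eq_mul] using this
    have hvS' : v ∉ S' := fun h => hvV' (hS'sub h)
    refine ⟨insert v S', insert_subset_iff.mpr ⟨hv, hS'sub.trans hV'sub⟩, ?_, ?_⟩
    · intro x hx y hy hxy
      rcases mem_insert.mp hx with rfl | hx' <;> rcases mem_insert.mp hy with rfl | hy'
      · exact absurd rfl hxy
      · exact (mem_filter.mp (hS'sub hy')).2.2
      · exact fun hR => (mem_filter.mp (hS'sub hx')).2.2 (hsym _ _ hR)
      · exact hS'ind x hx' y hy' hxy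
    · rw [card_insert_of_notMem hvS']
      push_cast
      have hcardR : (V'.card : ℝ) + ((d : ℝ) + 1) = V.card := by exact_mod_cast hcard
      have hbb'R : ((BR R V').card : ℝ) + ((d : ℝ) + 1) * d ≤ (BR R V).card := by
        exact_mod_cast hbb'
      have hmdR : (V.card : ℝ) * d ≤ (BR R V).card := by exact_mod_cast hmd
      have hs'nn : (0 : ℝ) ≤ (S'.card : ℝ) := Nat.cast_nonneg _
      have hb'nn : (0 : ℝ) ≤ ((BR R V').card : ℝ) := Nat.cast_nonneg _
      have hm'nn : (0 : ℝ) ≤ (V'.card : ℝ) := Nat.cast_nonneg _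
      have hm' : (V'.card : ℝ) = (V.card : ℝ) - ((d : ℝ) + 1) := by linarith
      rw [hm'] at hS'bd
      have hD : (V.card : ℝ) - ((d : ℝ) + 1) + (BR R V').card
          ≤ ((V.card : ℝ) + (BR R V).card) - ((d : ℝ) + 1) ^ 2 := by nlinarith [hbb'R]
      have hDnn : (0 : ℝ) ≤ ((V.card : ℝ) + (BR R V).card) - ((d : ℝ) + 1) ^ 2 :=
        le_trans (by linarith) hD
      rcases eq_or_lt_of_le hDnn with hD0 | hDpos
      · have hmk : (V.card : ℝ) = (d : ℝ) + 1 := by linarith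
        have hT : (V.card : ℝ) + (BR R V).card = (V.card : ℝ) ^ 2 := by
          rw [hmk]; linarith [hD0]
        rw [hT]
        nlinarith [hs'nn, sq_nonneg ((V.card : ℝ))]
      · have h1 : ((V.card : ℝ) - ((d : ℝ) + 1)) ^ 2
            ≤ (S'.card : ℝ) * (((V.card : ℝ) + (BR R V).card) - ((d : ℝ) + 1) ^ 2) :=
          le_trans hS'bd (mul_le_mul_of_nonneg_left hD hs'nn)
        have hTnn : (0 : ℝ) ≤ (V.card : ℝ) + (BR R V).card := by positivity
        have h2' := mul_le_mul_of_nonneg_right h1 hTnn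
        have h3 := sq_nonneg (((V.card : ℝ) + (BR R V).card) - (V.card : ℝ) * ((d : ℝ) + 1))
        have h4 : (V.card : ℝ) ^ 2 * (((V.card : ℝ) + (BR R V).card) - ((d : ℝ) + 1) ^ 2)
            ≤ (((S'.card : ℝ) + 1) * ((V.card : ℝ) + (BR R V).card))
              * (((V.card : ℝ) + (BR R V).card) - ((d : ℝ) + 1) ^ 2) := by
          linarith [h2', h3]
        exact le_of_mul_le_mul_right h4 hDpos

end indep

private def Edge {p n : ℕ} (hp : 5 ≤ p) (X : Fin p → Set (Fin n → ZMod p)) (j : Fin p)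
    (a b : Fin p → (Fin n → ZMod p)) : Prop :=
  ∃ w : Fin p → (Fin n → ZMod p), (∀ i, w i ∈ X i) ∧ ∑ i, w i = 0 ∧
    w ⟨0, by omega⟩ = a ⟨0, by omega⟩ ∧ w j = b j

private def Rel10 {p n : ℕ} (hp : 5 ≤ p) (X : Fin p → Set (Fin n → ZMod p))
    (a b : Fin p → (Fin n → ZMod p)) : Prop :=
  ∃ j : Fin p, 2 ≤ (j : ℕ) ∧ (Edge hp X j a b ∨ Edge hp X j b a)

private lemma core {p n : ℕ} (hp : 5 ≤ p)
    (X : Fin p → Set (Fin n → ZMod p))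
    (hX : ∀ x : Fin p → (Fin n → ZMod p), (∀ i, x i ∈ X i) → ∑ i, x i = 0 →
      x ⟨0, by omega⟩ = x ⟨1, by omega⟩)
    {j : Fin p} (hj : 2 ≤ (j : ℕ))
    {c c' e e' : Fin p → (Fin n → ZMod p)}
    (h1 : Edge hp X j c c') (h2 : Edge hp X j e e')
    (hsum : c ⟨0, by omega⟩ + c' j = e ⟨0, by omega⟩ + e' j) :
    c ⟨0, by omega⟩ = e ⟨0, by omega⟩ ∧ c' j = e' j := by
  classical
  obtain ⟨w, hwX, hwsum, hw0, hwj⟩ := h1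
  obtain ⟨v, hvX, hvsum, hv0, hvj⟩ := h2
  have hi0j : (⟨0, by omega⟩ : Fin p) ≠ j := by
    intro h
    have := congrArg Fin.val h
    simp only [Fin.val_mk] at this
    omega
  have hmem : ∀ i, (if (i = (⟨0, by omega⟩ : Fin p) ∨ i = j) then w i else v i) ∈ X i := by
    intro i
    split_ifs with h
    · exact hwX i
    · exact hvX i
  have hzsum : ∑ i, (if (i = (⟨0, by omega⟩ : Fin p) ∨ i = j) then w i else v i) = 0 := by
    have hsplit : ∑ i : Fin p,
        ((if (i = (⟨0, by omega⟩ : Fin p) ∨ i = j) then w i else v i) - v i)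
        = ∑ i ∈ ({(⟨0, by omega⟩ : Fin p), j} : Finset (Fin p)),
            ((if (i = (⟨0, by omega⟩ : Fin p) ∨ i = j) then w i else v i) - v i) := by
      refine (Finset.sum_subset (Finset.subset_univ _) ?_).symm
      intro i _ hi
      have h1 : ¬ (i = (⟨0, by omega⟩ : Fin p) ∨ i = j) := by
        simpa [Finset.mem_insert, Finset.mem_singleton] using hi
      rw [if_neg h1, sub_self]
    rw [Finset.sum_pair hi0j, if_pos (Or.inl rfl), if_pos (Or.inr rfl)] at hsplit
    rw [Finset.sum_sub_distrib, hvsum, sub_zero] at hsplit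
    rw [hsplit, hw0, hwj, hv0, hvj]
    linear_combination hsum
  have hkey2 : ¬ ((⟨1, by omega⟩ : Fin p) = (⟨0, by omega⟩ : Fin p)
      ∨ (⟨1, by omega⟩ : Fin p) = j) := by
    rintro (h | h) <;> · have := congrArg Fin.val h; simp only [Fin.val_mk] at this; omega
  have key : (if ((⟨0, by omega⟩ : Fin p) = (⟨0, by omega⟩ : Fin p)
        ∨ (⟨0, by omega⟩ : Fin p) = j) then w (⟨0, by omega⟩ : Fin p)
        else v (⟨0, by omega⟩ : Fin p))
      = (if ((⟨1, by omega⟩ : Fin p) = (⟨0, by omega⟩ : Fin p)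
        ∨ (⟨1, by omega⟩ : Fin p) = j) then w (⟨1, by omega⟩ : Fin p)
        else v (⟨1, by omega⟩ : Fin p)) := hX _ hmem hzsum
  rw [if_pos (Or.inl rfl), if_neg hkey2] at key
  -- key : w ⟨0,_⟩ = v ⟨1,_⟩
  have hv01 : v ⟨0, by omega⟩ = v ⟨1, by omega⟩ := hX v hvX hvsum
  have hc0 : c ⟨0, by omega⟩ = e ⟨0, by omega⟩ := by
    rw [← hw0, key, ← hv01, hv0]
  refine ⟨hc0, ?_⟩
  rw [hc0] at hsum
  exact add_left_cancel hsum



/-- Suppose `X_1, …, X_p ⊆ 𝔽_p^n` are such that every cycle (p-tuple summing to zero)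
`(x_1, …, x_p) ∈ X_1 × ⋯ × X_p` satisfies `x_1 = x_2`, and let `ℳ` be a collection of `L`
pairwise disjoint cycles in `X_1 × ⋯ × X_p`. Then there is a subcollection `ℳ' ⊆ ℳ` of size
`|ℳ'| ≥ L²/(2p^{n+1})` such that for any two distinct cycles
`(x_1, …, x_p), (x_1', …, x_p') ∈ ℳ'` and any `j ∈ {3, …, p}`, the pair `(x_1, x_j')` is
not `j`-extendable (i.e. there is no cycle `(w_1, …, w_p) ∈ X_1 × ⋯ × X_p` with `w_1 = x_1`
and `w_j = x_j'`). -/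
theorem stmt10 {p n : ℕ} (hp : p.Prime) (hp5 : 5 ≤ p) (hn : 0 < n)
    (X : Fin p → Set (Fin n → ZMod p))
    (hX : ∀ x : Fin p → (Fin n → ZMod p), (∀ i, x i ∈ X i) → ∑ i, x i = 0 →
      x ⟨0, by omega⟩ = x ⟨1, by omega⟩)
    (L : ℕ) (M : Finset (Fin p → (Fin n → ZMod p))) (hML : M.card = L)
    (hMcyc : ∀ c ∈ M, (∀ i, c i ∈ X i) ∧ ∑ i, c i = 0)
    (hMdisj : ∀ c ∈ M, ∀ c' ∈ M, c ≠ c' → ∀ i i', c i ≠ c' i') :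
    ∃ M' ⊆ M, (L : ℝ) ^ 2 / (2 * (p : ℝ) ^ (n + 1)) ≤ M'.card ∧
      ∀ c ∈ M', ∀ c' ∈ M', c ≠ c' → ∀ j : Fin p, 2 ≤ (j : ℕ) →
        ¬ ∃ w : Fin p → (Fin n → ZMod p), (∀ i, w i ∈ X i) ∧ ∑ i, w i = 0 ∧
          w ⟨0, by omega⟩ = c ⟨0, by omega⟩ ∧ w j = c' j := by
  classical
  haveI : NeZero p := ⟨by omega⟩
  have hcardG : Fintype.card (Fin n → ZMod p) = p ^ n := by
    simp [ZMod.card]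
  have hsym : ∀ a b, Rel10 hp5 X a b → Rel10 hp5 X b a := by
    rintro a b ⟨j, hj, h⟩
    exact ⟨j, hj, Or.symm h⟩
  have hMinj : ∀ c ∈ M, ∀ e ∈ M, c ⟨0, by omega⟩ = e ⟨0, by omega⟩ → c = e := by
    intro c hc e he h
    by_contra hne
    exact hMdisj c hc e he hne _ _ h
  have hMinj' : ∀ (j : Fin p), ∀ c ∈ M, ∀ e ∈ M, c j = e j → c = e := by
    intro j c hc e he h
    by_contra hne
    exact hMdisj c hc e he hne j j h
  have hL : M.card ≤ p ^ n := by
    have h1 : M.card ≤ (Finset.univ : Finset (Fin n → ZMod p)).card := by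
      apply Finset.card_le_card_of_injOn (fun c => c ⟨0, by omega⟩)
        (fun c _ => Finset.mem_univ _)
      intro c hc e he h
      exact hMinj c hc e he h
    rwa [Finset.card_univ, hcardG] at h1
  -- the extendable-pair finsets
  have hExtcard : ∀ j : Fin p, 2 ≤ (j : ℕ) →
      ((M ×ˢ M).filter fun q => Edge hp5 X j q.1 q.2).card ≤ p ^ n := by
    intro j hj
    have h1 : ((M ×ˢ M).filter fun q => Edge hp5 X j q.1 q.2).card
        ≤ (Finset.univ : Finset (Fin n → ZMod p)).card := by
      apply Finset.card_le_card_of_injOn (fun q => q.1 ⟨0, by omega⟩ + q.2 j)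
        (fun q _ => Finset.mem_univ _)
      intro q hq r hr h
      rw [Finset.mem_coe, Finset.mem_filter, Finset.mem_product] at hq hr
      obtain ⟨⟨hq1, hq2⟩, hqE⟩ := hq
      obtain ⟨⟨hr1, hr2⟩, hrE⟩ := hr
      obtain ⟨ha, hb⟩ := core hp5 X hX hj hqE hrE h
      exact Prod.ext (hMinj _ hq1 _ hr1 ha) (hMinj' j _ hq2 _ hr2 hb)
    rwa [Finset.card_univ, hcardG] at h1
  -- bound the number of conflicting pairs
  have hJcard : (Finset.univ.filter fun j : Fin p => 2 ≤ (j : ℕ)).card ≤ p - 1 := by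
    have hsub : (Finset.univ.filter fun j : Fin p => 2 ≤ (j : ℕ))
        ⊆ Finset.univ.erase ⟨0, by omega⟩ := by
      intro j hjJ
      rw [Finset.mem_erase]
      refine ⟨?_, Finset.mem_univ _⟩
      have hj := (Finset.mem_filter.mp hjJ).2
      intro h
      have := congrArg Fin.val h
      simp only [Fin.val_mk] at this
      omega
    calc (Finset.univ.filter fun j : Fin p => 2 ≤ (j : ℕ)).card
        ≤ (Finset.univ.erase (⟨0, by omega⟩ : Fin p)).card := Finset.card_le_card hsub
      _ = p - 1 := by
          rw [Finset.card_erase_of_mem (Finset.mem_univ _), Finset.card_univ, Fintype.card_fin]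
  have hBRsub : BR (Rel10 hp5 X) M ⊆
      (Finset.univ.filter fun j : Fin p => 2 ≤ (j : ℕ)).biUnion
        (fun j => ((M ×ˢ M).filter fun q => Edge hp5 X j q.1 q.2)
          ∪ ((M ×ˢ M).filter fun q => Edge hp5 X j q.1 q.2).image Prod.swap) := by
    intro q hq
    rw [mem_BR] at hq
    obtain ⟨hq1, hq2, hne, j, hj, hE⟩ := hq
    rw [Finset.mem_biUnion]
    refine ⟨j, Finset.mem_filter.mpr ⟨Finset.mem_univ _, hj⟩, ?_⟩
    rw [Finset.mem_union]
    rcases hE with hE | hE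
    · exact Or.inl (Finset.mem_filter.mpr ⟨Finset.mem_product.mpr ⟨hq1, hq2⟩, hE⟩)
    · refine Or.inr (Finset.mem_image.mpr ⟨(q.2, q.1),
        Finset.mem_filter.mpr ⟨Finset.mem_product.mpr ⟨hq2, hq1⟩, hE⟩, ?_⟩)
      simp
  have hBRcard : (BR (Rel10 hp5 X) M).card ≤ (p - 1) * (2 * p ^ n) := by
    calc (BR (Rel10 hp5 X) M).card
        ≤ ((Finset.univ.filter fun j : Fin p => 2 ≤ (j : ℕ)).biUnion
            (fun j => ((M ×ˢ M).filter fun q => Edge hp5 X j q.1 q.2)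
              ∪ ((M ×ˢ M).filter fun q => Edge hp5 X j q.1 q.2).image Prod.swap)).card :=
          Finset.card_le_card hBRsub
      _ ≤ ∑ j ∈ Finset.univ.filter fun j : Fin p => 2 ≤ (j : ℕ),
            (((M ×ˢ M).filter fun q => Edge hp5 X j q.1 q.2)
              ∪ ((M ×ˢ M).filter fun q => Edge hp5 X j q.1 q.2).image Prod.swap).card :=
          Finset.card_biUnion_le
      _ ≤ ∑ j ∈ Finset.univ.filter fun j : Fin p => 2 ≤ (j : ℕ), 2 * p ^ n := by
          apply Finset.sum_le_sum
          intro j hjJ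
          have hj2 := (Finset.mem_filter.mp hjJ).2
          calc (((M ×ˢ M).filter fun q => Edge hp5 X j q.1 q.2)
                ∪ ((M ×ˢ M).filter fun q => Edge hp5 X j q.1 q.2).image Prod.swap).card
              ≤ ((M ×ˢ M).filter fun q => Edge hp5 X j q.1 q.2).card
                + (((M ×ˢ M).filter fun q => Edge hp5 X j q.1 q.2).image Prod.swap).card :=
                Finset.card_union_le _ _
            _ ≤ p ^ n + p ^ n :=
                add_le_add (hExtcard j hj2)
                  (le_trans Finset.card_image_le (hExtcard j hj2))
            _ = 2 * p ^ n := by ring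
      _ = (Finset.univ.filter fun j : Fin p => 2 ≤ (j : ℕ)).card * (2 * p ^ n) := by
          rw [Finset.sum_const, smul_eq_mul]
      _ ≤ (p - 1) * (2 * p ^ n) := Nat.mul_le_mul_right _ hJcard
  have hkey : M.card + (BR (Rel10 hp5 X) M).card ≤ 2 * p ^ (n + 1) := by
    have h1 : M.card + (BR (Rel10 hp5 X) M).card ≤ p ^ n + (p - 1) * (2 * p ^ n) :=
      add_le_add hL hBRcard
    have h2 : p ^ n + (p - 1) * (2 * p ^ n) ≤ 2 * p ^ (n + 1) := by
      obtain ⟨r, rfl⟩ : ∃ r, p = r + 1 := ⟨p - 1, by omega⟩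
      rw [pow_succ]
      simp only [Nat.add_sub_cancel]
      have hq1 : 1 ≤ (r + 1) ^ n := Nat.one_le_pow _ _ (by omega)
      nlinarith [hq1]
    exact le_trans h1 h2
  obtain ⟨S, hSM, hSind, hSbd⟩ := indep_bound (Rel10 hp5 X) hsym M.card M le_rfl
  refine ⟨S, hSM, ?_, ?_⟩
  · rw [div_le_iff₀ (by positivity : (0 : ℝ) < 2 * (p : ℝ) ^ (n + 1))]
    have hcast : ((M.card : ℝ) + ((BR (Rel10 hp5 X) M).card : ℝ)) ≤ 2 * (p : ℝ) ^ (n + 1) := by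
      exact_mod_cast hkey
    calc (L : ℝ) ^ 2 = (M.card : ℝ) ^ 2 := by rw [hML]
      _ ≤ S.card * ((M.card : ℝ) + (BR (Rel10 hp5 X) M).card) := hSbd
      _ ≤ S.card * (2 * (p : ℝ) ^ (n + 1)) := by
          apply mul_le_mul_of_nonneg_left hcast (Nat.cast_nonneg _)
  · intro c hc c' hc' hne j hj hex
    exact hSind c hc c' hc' hne ⟨j, hj, Or.inl hex⟩
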